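/- Let gamma >= 1, J_0 > 0, b_0 > 0, and let u_s = J_0 / (J_0^2/gamma)^{1/(gamma+1)}. Suppose (u, E) : [0, T] -> R^2 is a C^1 solution of the ODE system u' = u^gamma E / (u^{gamma+1} - gamma J_0^{gamma-1}), E' = J_0/u - b_0, with u(x_1) > u_s for all x_1 in [0, T]. Then the quantity (1/2) E(x_1)^2 - H(u(x_1)) is constant on [0, T], where H(u) = integral from u_s to u of (b_0/t^{gamma+1}) (t^{gamma+1} - u_s^{gamma+1}) (J_0/b_0 - t) dt. -/

import Mathlib

open Real MeasureTheory intervalIntegral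

/-- First integral of the 1-D Euler–Poisson ODE system: along any `C¹` supersonic solution
`(u,E)` of `u' = u^γ E/(u^{γ+1} - γ J₀^{γ-1})`, `E' = J₀/u - b₀` on `[0,T]`, the quantity
`(1/2)E² - H(u)` is constant, where
`H(u) = ∫_{u_s}^{u} (b₀/t^{γ+1})(t^{γ+1} - u_s^{γ+1})(J₀/b₀ - t) dt`. -/
theorem euler_poisson_first_integral (γ J₀ b₀ T : ℝ) (hγ : 1 ≤ γ) (hJ : 0 < J₀)
    (hb : 0 < b₀) (hT : 0 < T)
    (us : ℝ) (hus : us = J₀ / (J₀ ^ 2 / γ) ^ (1 / (γ + 1)))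
    (H : ℝ → ℝ)
    (hH : ∀ v : ℝ, H v =
      ∫ t in us..v, (b₀ / t ^ (γ + 1)) * (t ^ (γ + 1) - us ^ (γ + 1)) * (J₀ / b₀ - t))
    (u E : ℝ → ℝ)
    (hu' : ∀ x ∈ Set.Icc 0 T,
      HasDerivWithinAt u ((u x) ^ γ * E x / ((u x) ^ (γ + 1) - γ * J₀ ^ (γ - 1)))
        (Set.Icc 0 T) x)
    (hE' : ∀ x ∈ Set.Icc 0 T,
      HasDerivWithinAt E (J₀ / u x - b₀) (Set.Icc 0 T) x)
    (hsup : ∀ x ∈ Set.Icc 0 T, us < u x) :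
    ∀ x ∈ Set.Icc (0 : ℝ) T,
      (1 / 2) * (E x) ^ 2 - H (u x) = (1 / 2) * (E 0) ^ 2 - H (u 0) := by
  have hγ0 : (0:ℝ) < γ := lt_of_lt_of_le one_pos hγ
  have hγ1 : (0:ℝ) < γ + 1 := by linarith
  set g : ℝ → ℝ := fun t => (b₀ / t ^ (γ + 1)) * (t ^ (γ + 1) - us ^ (γ + 1)) * (J₀ / b₀ - t)
    with hg
  -- us > 0
  have hc0 : (0:ℝ) < (J₀ ^ 2 / γ) ^ (1 / (γ + 1)) :=
    Real.rpow_pos_of_pos (by positivity) _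
  have hus0 : 0 < us := by rw [hus]; positivity
  -- us ^ (γ+1) = γ * J₀ ^ (γ-1)
  have huspow : us ^ (γ + 1) = γ * J₀ ^ (γ - 1) := by
    rw [hus, Real.div_rpow hJ.le hc0.le, ← Real.rpow_natCast J₀ 2,
      ← Real.rpow_mul (by positivity), one_div_mul_cancel (ne_of_gt hγ1), Real.rpow_one]
    rw [div_div_eq_mul_div, mul_comm, mul_div_assoc, ← Real.rpow_sub hJ]
    norm_num
    ring_nf
    exact Or.inl trivial
  have hrc : Continuous fun t : ℝ => t ^ (γ + 1) :=
    Real.continuous_rpow_const (by linarith)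
  -- g is measurable
  have hgmeas : Measurable g := by
    apply Measurable.mul
    apply Measurable.mul
    · exact measurable_const.div hrc.measurable
    · exact hrc.measurable.sub measurable_const
    · exact measurable_const.sub measurable_id
  -- g is continuous on Ioi 0
  have hgcont : ContinuousOn g (Set.Ioi 0) := by
    apply ContinuousOn.mul
    apply ContinuousOn.mul
    · exact continuousOn_const.div hrc.continuousOn
        (fun t ht => ne_of_gt (Real.rpow_pos_of_pos ht _))
    · exact (hrc.continuousOn.sub continuousOn_const)
    · exact (continuousOn_const.sub continuousOn_id)
  -- derivative of H
  have hHfun : H = fun v => ∫ t in us..v, g t := by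
    funext v; exact hH v
  have hHderiv : ∀ v : ℝ, 0 < v → HasDerivAt H (g v) v := by
    intro v hv
    rw [hHfun]
    apply intervalIntegral.integral_hasDerivAt_right
    · apply ContinuousOn.intervalIntegrable
      apply hgcont.mono
      intro t ht
      rcases Set.mem_uIcc.1 ht with h | h
      · exact lt_of_lt_of_le hus0 h.1
      · exact lt_of_lt_of_le hv h.1
    · exact hgmeas.stronglyMeasurable.stronglyMeasurableAtFilter
    · exact hgcont.continuousAt (Ioi_mem_nhds hv)
  -- the function F
  set F : ℝ → ℝ := fun x => (1 / 2) * (E x) ^ 2 - H (u x) with hF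
  have hFderiv : ∀ x ∈ Set.Icc (0:ℝ) T, HasDerivWithinAt F 0 (Set.Icc 0 T) x := by
    intro x hx
    have hux : us < u x := hsup x hx
    have hux0 : 0 < u x := lt_trans hus0 hux
    have hD : (u x) ^ (γ + 1) - γ * J₀ ^ (γ - 1) ≠ 0 := by
      rw [← huspow]
      have := Real.rpow_lt_rpow hus0.le hux hγ1
      linarith
    have h1 : HasDerivWithinAt (fun x => (1 / 2) * (E x) ^ 2)
        ((1/2) * (2 * E x ^ 1 * (J₀ / u x - b₀))) (Set.Icc 0 T) x :=
      ((hE' x hx).pow 2).const_mul (1/2)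
    have h2 : HasDerivWithinAt (fun x => H (u x))
        (g (u x) * ((u x) ^ γ * E x / ((u x) ^ (γ + 1) - γ * J₀ ^ (γ - 1))))
        (Set.Icc 0 T) x :=
      (hHderiv (u x) hux0).comp_hasDerivWithinAt x (hu' x hx)
    have h3 := h1.sub h2
    convert h3 using 1
    case e'_4 => rfl
    case e'_5 => rfl
    case e'_8 => rfl
    rw [hg]
    simp only
    rw [← huspow]
    have hpowsplit : (u x) ^ (γ + 1) = (u x) ^ γ * u x := by
      rw [Real.rpow_add hux0, Real.rpow_one]
    have hugne : (u x) ^ γ ≠ 0 := ne_of_gt (Real.rpow_pos_of_pos hux0 _)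
    have hDne : (u x) ^ (γ + 1) - us ^ (γ + 1) ≠ 0 := by
      have := Real.rpow_lt_rpow hus0.le hux hγ1
      linarith
    field_simp
    rw [hpowsplit]
    ring
  have hFcont : ContinuousOn F (Set.Icc 0 T) := fun x hx =>
    (hFderiv x hx).continuousWithinAt
  have key : ∀ x ∈ Set.Icc (0:ℝ) T, F x = F 0 := by
    apply constant_of_has_deriv_right_zero hFcont
    intro x hx
    exact ((hFderiv x (Set.mem_Icc_of_Ico hx)).mono
      (Set.Icc_subset_Icc hx.1 le_rfl)).mono_of_mem_nhdsWithin
      (Icc_mem_nhdsGE_of_mem ⟨le_refl x, hx.2⟩)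
  intro x hx
  exact key x hx
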